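/- If I = ℕ and each map π_{i+1} : X_{i+1} → X_i is a submetry, then each projection π^∞_i : X_∞ → X_i is a submetry. -/
import Mathlib


open Set

section StmtAux

variable {X : ℕ → Type*} [∀ i, MetricSpace (X i)] (π : ∀ i, X (i + 1) → X i)

/-- Iterated downward projection from level `j` to level `i ≤ j`. -/
def stmt5Down (i : ℕ) : ∀ {j : ℕ}, i ≤ j → X j → X i :=
  Nat.leRec (motive := fun j _ => X j → X i) id (fun j _ f z => f (π j z))

lemma stmt5Down_self (i : ℕ) (z : X i) : stmt5Down π i le_rfl z = z := by
  have : stmt5Down π i (le_rfl : i ≤ i) = id := Nat.leRec_self _ _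
  simp [this]

lemma stmt5Down_succ (i j : ℕ) (h : i ≤ j) (z : X (j + 1)) :
    stmt5Down π i (Nat.le_succ_of_le h) z = stmt5Down π i h (π j z) := by
  have := Nat.leRec_succ (motive := fun j _ => X j → X i) id
    (fun j _ f z => f (π j z)) h (h2 := Nat.le_succ_of_le h)
  exact congrFun this z

lemma stmt5Down_lip (hL : ∀ i, LipschitzWith 1 (π i)) (i : ℕ) :
    ∀ j (h : i ≤ j) (z z' : X j),
      dist (stmt5Down π i h z) (stmt5Down π i h z') ≤ dist z z' := by
  intro j h
  induction j, h using Nat.le_induction with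
  | base =>
    intro z z'
    rw [stmt5Down_self, stmt5Down_self]
  | succ j h ih =>
    intro z z'
    rw [stmt5Down_succ π i j h, stmt5Down_succ π i j h]
    calc dist (stmt5Down π i h (π j z)) (stmt5Down π i h (π j z'))
        ≤ dist (π j z) (π j z') := ih _ _
      _ ≤ dist z z' := by
          have := (hL j).dist_le_mul z z'
          simpa using this

lemma stmt5Down_comm (i : ℕ) :
    ∀ j (h : i + 1 ≤ j) (z : X j),
      π i (stmt5Down π (i + 1) h z) =
        stmt5Down π i (Nat.le_of_succ_le h) z := by
  intro j h
  induction j, h using Nat.le_induction with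
  | base =>
    intro z
    rw [stmt5Down_self]
    have h1 : stmt5Down π i (Nat.le_of_succ_le (le_rfl : i + 1 ≤ i + 1)) z
        = stmt5Down π i (Nat.le_succ_of_le le_rfl) z := rfl
    rw [h1, stmt5Down_succ π i i le_rfl, stmt5Down_self]
  | succ j h ih =>
    intro z
    rw [stmt5Down_succ π (i + 1) j h, ih]
    have h2 : stmt5Down π i (Nat.le_of_succ_le (Nat.le_succ_of_le h)) z
        = stmt5Down π i (Nat.le_succ_of_le (Nat.le_of_succ_le h)) z := rfl
    rw [h2, stmt5Down_succ π i j (Nat.le_of_succ_le h)]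

lemma stmt5Down_coherent (x : ∀ i, X i) (hx : ∀ i, π i (x (i + 1)) = x i) (i : ℕ) :
    ∀ j (h : i ≤ j), stmt5Down π i h (x j) = x i := by
  intro j h
  induction j, h using Nat.le_induction with
  | base => exact stmt5Down_self π i (x i)
  | succ j h ih => rw [stmt5Down_succ π i j h, hx j, ih]

/-- Iterated lifting of `yk : X k` along the fibers over `x`. -/
noncomputable def stmt5Lift
    (hπ : ∀ i, ∀ (y y' : X i) (x : X (i + 1)), π i x = y →
      ∃ x', π i x' = y' ∧ dist x x' = dist y y')
    (x : ∀ i, X i) (hx : ∀ i, π i (x (i + 1)) = x i) (k : ℕ) (yk : X k) :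
    ∀ m, X (k + m)
  | 0 => yk
  | m + 1 => Classical.choose
      (hπ (k + m) (x (k + m)) (stmt5Lift hπ x hx k yk m) (x (k + m + 1)) (hx (k + m)))

lemma stmt5Lift_spec
    (hπ : ∀ i, ∀ (y y' : X i) (x : X (i + 1)), π i x = y →
      ∃ x', π i x' = y' ∧ dist x x' = dist y y')
    (x : ∀ i, X i) (hx : ∀ i, π i (x (i + 1)) = x i) (k : ℕ) (yk : X k) (m : ℕ) :
    π (k + m) (stmt5Lift π hπ x hx k yk (m + 1)) = stmt5Lift π hπ x hx k yk m ∧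
      dist (x (k + m + 1)) (stmt5Lift π hπ x hx k yk (m + 1)) =
        dist (x (k + m)) (stmt5Lift π hπ x hx k yk m) :=
  Classical.choose_spec
    (hπ (k + m) (x (k + m)) (stmt5Lift π hπ x hx k yk m) (x (k + m + 1)) (hx (k + m)))

lemma stmt5Lift_dist
    (hπ : ∀ i, ∀ (y y' : X i) (x : X (i + 1)), π i x = y →
      ∃ x', π i x' = y' ∧ dist x x' = dist y y')
    (x : ∀ i, X i) (hx : ∀ i, π i (x (i + 1)) = x i) (k : ℕ) (yk : X k) :
    ∀ m, dist (x (k + m)) (stmt5Lift π hπ x hx k yk m) = dist (x k) yk := by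
  intro m
  induction m with
  | zero => rfl
  | succ m ih => exact ((stmt5Lift_spec π hπ x hx k yk m).2).trans ih

lemma stmt5Lift_down
    (hπ : ∀ i, ∀ (y y' : X i) (x : X (i + 1)), π i x = y →
      ∃ x', π i x' = y' ∧ dist x x' = dist y y')
    (x : ∀ i, X i) (hx : ∀ i, π i (x (i + 1)) = x i) (k : ℕ) (yk : X k) :
    ∀ m (h : k ≤ k + m), stmt5Down π k h (stmt5Lift π hπ x hx k yk m) = yk := by
  intro m
  induction m with
  | zero => intro h; exact stmt5Down_self π k yk
  | succ m ih =>
    intro h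
    have h' : k ≤ k + m := Nat.le_add_right k m
    have heq : stmt5Down π k h (stmt5Lift π hπ x hx k yk (m + 1))
        = stmt5Down π k (Nat.le_succ_of_le h') (stmt5Lift π hπ x hx k yk (m + 1)) := rfl
    rw [heq, stmt5Down_succ π k (k + m) h', (stmt5Lift_spec π hπ x hx k yk m).1, ih]

end StmtAux

/-- If `I = ℕ` and each `π_{i+1} : X_{i+1} → X_i` is a submetry, then every
projection `π^∞_k : X_∞ → X_k` is a submetry: it is 1-Lipschitz for the
supremum metric `d_∞`, and for every `x ∈ X_∞` over `x_k` and every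
`y_k ∈ X_k` there is `y ∈ X_∞` with `y_k` as `k`-th coordinate and
`d_∞(x, y) = d_k(x_k, y_k)`. -/
theorem stmt5
    (X : ℕ → Type*) [∀ i, MetricSpace (X i)] (star : ∀ i, X i)
    (π : ∀ i, X (i + 1) → X i)
    (hπstar : ∀ i, π i (star (i + 1)) = star i)
    (hπsub : ∀ i, LipschitzWith 1 (π i) ∧
      ∀ (y y' : X i) (x : X (i + 1)), π i x = y →
        ∃ x', π i x' = y' ∧ dist x x' = dist y y')
    (mem : (∀ i, X i) → Prop)
    (hmem : ∀ x, mem x ↔ (∀ i, π i (x (i + 1)) = x i) ∧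
      BddAbove (range fun i => dist (star i) (x i)))
    (D : (∀ i, X i) → (∀ i, X i) → ℝ)
    (hD : ∀ x y, D x y = ⨆ i, dist (x i) (y i)) :
    ∀ k : ℕ,
      (∀ x y, mem x → mem y → dist (x k) (y k) ≤ 1 * D x y) ∧
      (∀ x, mem x → ∀ yk : X k,
        ∃ y, mem y ∧ y k = yk ∧ D x y = dist (x k) yk) := by
  have hL : ∀ i, LipschitzWith 1 (π i) := fun i => (hπsub i).1
  have hπ' : ∀ i, ∀ (y y' : X i) (x : X (i + 1)), π i x = y →
      ∃ x', π i x' = y' ∧ dist x x' = dist y y' := fun i => (hπsub i).2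
  intro k
  constructor
  · intro x y hx hy
    obtain ⟨-, cx, hcx⟩ := (hmem x).1 hx
    obtain ⟨-, cy, hcy⟩ := (hmem y).1 hy
    rw [hD x y, one_mul]
    have hb : BddAbove (range fun i => dist (x i) (y i)) := by
      refine ⟨cx + cy, ?_⟩
      rintro r ⟨i, rfl⟩
      calc dist (x i) (y i) ≤ dist (x i) (star i) + dist (star i) (y i) :=
            dist_triangle _ _ _
        _ ≤ cx + cy := by
            rw [dist_comm (x i) (star i)]
            exact add_le_add (hcx ⟨i, rfl⟩) (hcy ⟨i, rfl⟩)
    exact le_ciSup hb k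
  · intro x hx yk
    obtain ⟨hx1, cx, hcx⟩ := (hmem x).1 hx
    set U := stmt5Lift π hπ' x hx1 k yk with hU
    set y : ∀ i, X i := fun i => stmt5Down π i (Nat.le_add_left i k) (U i) with hy
    have hdist : ∀ i, dist (x i) (y i) ≤ dist (x k) yk := by
      intro i
      have hxi : x i = stmt5Down π i (Nat.le_add_left i k) (x (k + i)) :=
        (stmt5Down_coherent π x hx1 i (k + i) (Nat.le_add_left i k)).symm
      calc dist (x i) (y i)
          = dist (stmt5Down π i (Nat.le_add_left i k) (x (k + i)))
              (stmt5Down π i (Nat.le_add_left i k) (U i)) := by rw [← hxi]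
        _ ≤ dist (x (k + i)) (U i) := stmt5Down_lip π hL i _ _ _ _
        _ = dist (x k) yk := stmt5Lift_dist π hπ' x hx1 k yk i
    have hyk : y k = yk := stmt5Lift_down π hπ' x hx1 k yk k (Nat.le_add_left k k)
    have hcompat : ∀ i, π i (y (i + 1)) = y i := by
      intro i
      have h1 : π i (y (i + 1)) =
          stmt5Down π i (Nat.le_of_succ_le (Nat.le_add_left (i + 1) k)) (U (i + 1)) :=
        stmt5Down_comm π i (k + (i + 1)) (Nat.le_add_left (i + 1) k) (U (i + 1))
      have h2 : stmt5Down π i (Nat.le_of_succ_le (Nat.le_add_left (i + 1) k)) (U (i + 1)) =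
          stmt5Down π i (Nat.le_succ_of_le (Nat.le_add_left i k)) (U (i + 1)) := rfl
      rw [h1, h2, stmt5Down_succ π i (k + i) (Nat.le_add_left i k),
        (stmt5Lift_spec π hπ' x hx1 k yk i).1]
    have hmemy : mem y := by
      rw [hmem]
      refine ⟨hcompat, cx + dist (x k) yk, ?_⟩
      rintro r ⟨i, rfl⟩
      calc dist (star i) (y i) ≤ dist (star i) (x i) + dist (x i) (y i) :=
            dist_triangle _ _ _
        _ ≤ cx + dist (x k) yk := add_le_add (hcx ⟨i, rfl⟩) (hdist i)
    refine ⟨y, hmemy, hyk, ?_⟩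
    rw [hD x y]
    apply le_antisymm
    · exact ciSup_le hdist
    · have hb : BddAbove (range fun i => dist (x i) (y i)) :=
        ⟨dist (x k) yk, by rintro r ⟨i, rfl⟩; exact hdist i⟩
      calc dist (x k) yk = dist (x k) (y k) := by rw [hyk]
        _ ≤ ⨆ i, dist (x i) (y i) := le_ciSup hb k
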